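/- With R_V(F) := (e_T^{iV/ħ})^{⋆−1} ⋆ (e_T^{iV/ħ} ·_T F) on regular functionals, the intertwining relation {R_V(F), S₀}_⋆ = R_V(ŝ F) holds for all F, where ŝ(X) = e_T^{−iV/ħ} ·_T {e_T^{iV/ħ} ·_T X, S₀}_⋆, provided the quantum master equation {e_T^{iV/ħ}, S₀}_⋆ = 0 holds. -/
import Mathlib


/-- The sign `(-1)^s` associated to a parity `s ∈ ZMod 2`. -/
noncomputable def sg (s : ZMod 2) : ℂ := if s = 0 then 1 else -1

/-- With `R_V(F) := (e_T^{iV/ħ})^{⋆−1} ⋆ (e_T^{iV/ħ} ·_T F)`, the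
intertwining relation `{R_V(F), S₀}_⋆ = R_V(ŝ F)` holds for all `F`, where
`ŝ(X) = e_T^{−iV/ħ} ·_T {e_T^{iV/ħ} ·_T X, S₀}_⋆`, provided the quantum master equation
`{e_T^{iV/ħ}, S₀}_⋆ = 0` holds.  The noncommutative star product is the ring product of
`A`; the commutative time-ordered product `mT` is given as bilinear data. -/
theorem RV_intertwines_shat
    {A : Type*} [Ring A] [Algebra ℂ A]
    (𝒜 : ZMod 2 → Submodule ℂ A)
    (mT : A →ₗ[ℂ] A →ₗ[ℂ] A)
    (hmTcomm : ∀ x y, mT x y = mT y x)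
    (hmTassoc : ∀ x y z, mT (mT x y) z = mT x (mT y z))
    (hmTone : ∀ x, mT 1 x = x)
    (D : A →ₗ[ℂ] A)
    (hDder : ∀ (i : ZMod 2) (x y : A), x ∈ 𝒜 i →
      D (x * y) = D x * y + sg i • (x * D y))
    (E Einvst EinvT : A)
    (hE0 : E ∈ 𝒜 0) (hEinvst0 : Einvst ∈ 𝒜 0)
    (hstE : E * Einvst = 1) (hstE' : Einvst * E = 1)
    (hTE : mT E EinvT = 1)
    (hQME : D E = 0) :
    ∀ F : A,
      D (Einvst * mT E F)
        = Einvst * mT E (mT EinvT (D (mT E F))) := by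
  have hsg0 : sg 0 = (1:ℂ) := by simp [sg]
  -- D 1 = 0
  have hD1 : D (1:A) = 0 := by
    have h := hDder 0 E 1 hE0
    rw [mul_one, mul_one, hsg0, one_smul] at h
    have hE1 : E * D 1 = 0 := (left_eq_add.mp h)
    calc D (1:A) = Einvst * (E * D 1) := by rw [← mul_assoc, hstE', one_mul]
    _ = 0 := by rw [hE1, mul_zero]
  -- D Einvst = 0
  have hDinv : D Einvst = 0 := by
    have h := hDder 0 Einvst E hEinvst0
    rw [hstE', hD1, hQME, mul_zero, hsg0, one_smul, add_zero] at h
    calc D Einvst = D Einvst * E * Einvst := by rw [mul_assoc, hstE, mul_one]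
    _ = 0 := by rw [← h, zero_mul]
  intro F
  have hcollapse : mT E (mT EinvT (D (mT E F))) = D (mT E F) := by
    rw [← hmTassoc, hTE, hmTone]
  rw [hcollapse]
  have h := hDder 0 Einvst (mT E F) hEinvst0
  rw [hDinv, zero_mul, zero_add, hsg0, one_smul] at h
  exact h
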